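/- Let $(X_t)$ be a Markov chain on finite state space $V$, $W\subseteq V$ with $|W|=m$, $X_0\notin W$, $\lambda = 1-\max\{p(u,w):u\in V, u\ne w\in W\}>0$, $L\ge 1$, and define $\xi_s = \sum_{w\in W}\mathbf{1}\{T_w > s\wedge r_w\}/H_w(s\wedge r_w - 1)$ as in the martingale construction (with $H_w(t)=\prod_{i=0}^t(1-p(X_i,w))$ and $r_w = \min\{t:H_w(t)<\lambda/L\}$). Then for any $\vartheta > 0$ and any $s$, $\Pr(|\xi_s - m| > \vartheta m) \le 2\exp\left[-\vartheta^2\lambda^4 m/(8L)^2\right]$. -/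

import Mathlib

open Finset

/-- `HmP p ω w t = ∏_{i<t} (1 - p(ω_i,w))`, i.e. `H_w(t-1)` with `H_w(-1)=1`. -/
noncomputable def HmP {V : Type*} (p : V → V → ℝ) (ω : ℕ → V) (w : V) (t : ℕ) : ℝ :=
  ∏ i ∈ Finset.range t, (1 - p (ω i) w)

/-- `minSR p lam L ω w s = min s r_w`, where `r_w = min{t : H_w(t) < lam/L}`. -/
noncomputable def minSR {V : Type*} (p : V → V → ℝ) (lam L : ℝ)
    (ω : ℕ → V) (w : V) (s : ℕ) : ℕ :=
  sInf ({t : ℕ | HmP p ω w (t + 1) < lam / L} ∪ {s})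

open scoped Classical in
/-- `ξ_s = ∑_{w∈W} 1{T_w > s ∧ r_w}/H_w(s ∧ r_w - 1)` along the trajectory `ω`. -/
noncomputable def xiSum {V : Type*} (p : V → V → ℝ) (W : Finset V) (lam L : ℝ)
    (ω : ℕ → V) (s : ℕ) : ℝ :=
  ∑ w ∈ W, (if ∀ t ≤ minSR p lam L ω w s, ω t ≠ w then (1 : ℝ) else 0) /
      HmP p ω w (minSR p lam L ω w s)

namespace XiAux

section Everything

variable {V : Type*} (p : V → V → ℝ) (lam L : ℝ)

lemma HmP_zero (ω : ℕ → V) (w : V) : HmP p ω w 0 = 1 := by simp [HmP]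

lemma HmP_succ (ω : ℕ → V) (w : V) (t : ℕ) :
    HmP p ω w (t + 1) = HmP p ω w t * (1 - p (ω t) w) := by
  simp [HmP, Finset.prod_range_succ]

lemma HmP_congr {ω ω' : ℕ → V} {t : ℕ} (h : ∀ i < t, ω i = ω' i) (w : V) :
    HmP p ω w t = HmP p ω' w t := by
  unfold HmP
  exact Finset.prod_congr rfl fun i hi => by rw [h i (Finset.mem_range.1 hi)]

lemma minSR_le (ω : ℕ → V) (w : V) (s : ℕ) : minSR p lam L ω w s ≤ s :=
  Nat.sInf_le (Or.inr rfl)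

lemma not_lt_of_lt_minSR {ω : ℕ → V} {w : V} {s k : ℕ} (hk : k < minSR p lam L ω w s) :
    ¬ HmP p ω w (k + 1) < lam / L := fun h =>
  Nat.notMem_of_lt_sInf hk (Or.inl h)

lemma HmP_minSR_ge (hlam0 : 0 < lam) (hlamL : lam ≤ L) (ω : ℕ → V) (w : V) (s : ℕ) :
    lam / L ≤ HmP p ω w (minSR p lam L ω w s) := by
  cases h : minSR p lam L ω w s with
  | zero =>
      rw [HmP_zero]
      exact div_le_one_of_le₀ hlamL (by linarith)
  | succ k =>
      have := not_lt_of_lt_minSR p lam L (ω := ω) (w := w) (s := s) (k := k) (by omega)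
      linarith [not_lt.1 this]

lemma minSR_eq_of_alive {ω : ℕ → V} {w : V} {s : ℕ}
    (h : lam / L ≤ HmP p ω w (minSR p lam L ω w s + 1)) : minSR p lam L ω w s = s := by
  have hmem : minSR p lam L ω w s ∈ _ :=
    Nat.sInf_mem (s := {t : ℕ | HmP p ω w (t + 1) < lam / L} ∪ {s}) ⟨s, Or.inr rfl⟩
  rcases hmem with hmem | hmem
  · exact absurd hmem (not_lt.2 h)
  · exact hmem

lemma minSR_congr {ω ω' : ℕ → V} {t : ℕ} (h : ∀ i < t, ω i = ω' i) (w : V) :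
    minSR p lam L ω w t = minSR p lam L ω' w t := by
  unfold minSR
  have hiff : ∀ i < t, (HmP p ω w (i + 1) < lam / L ↔ HmP p ω' w (i + 1) < lam / L) := by
    intro i hi
    rw [HmP_congr p (fun j hj => h j (by omega)) w]
  -- both sInf are ≤ t; compare
  apply le_antisymm
  · have hmem : sInf ({u : ℕ | HmP p ω' w (u + 1) < lam / L} ∪ {t}) ∈ _ :=
      Nat.sInf_mem (s := {u : ℕ | HmP p ω' w (u + 1) < lam / L} ∪ {t}) ⟨t, Or.inr rfl⟩
    have hle : sInf ({u : ℕ | HmP p ω' w (u + 1) < lam / L} ∪ {t}) ≤ t := Nat.sInf_le (Or.inr rfl)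
    rcases hmem with hmem | hmem
    · rcases eq_or_lt_of_le hle with he | hlt
      · rw [he]; exact Nat.sInf_le (Or.inr rfl)
      · exact Nat.sInf_le (Or.inl ((hiff _ hlt).2 hmem))
    · simp only [Set.mem_singleton_iff] at hmem
      rw [hmem]; exact Nat.sInf_le (Or.inr rfl)
  · have hmem : sInf ({u : ℕ | HmP p ω w (u + 1) < lam / L} ∪ {t}) ∈ _ :=
      Nat.sInf_mem (s := {u : ℕ | HmP p ω w (u + 1) < lam / L} ∪ {t}) ⟨t, Or.inr rfl⟩
    have hle : sInf ({u : ℕ | HmP p ω w (u + 1) < lam / L} ∪ {t}) ≤ t := Nat.sInf_le (Or.inr rfl)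
    rcases hmem with hmem | hmem
    · rcases eq_or_lt_of_le hle with he | hlt
      · rw [he]; exact Nat.sInf_le (Or.inr rfl)
      · exact Nat.sInf_le (Or.inl ((hiff _ hlt).1 hmem))
    · simp only [Set.mem_singleton_iff] at hmem
      rw [hmem]; exact Nat.sInf_le (Or.inr rfl)

lemma minSR_succ_alive {ω : ℕ → V} {w : V} {t : ℕ}
    (h : lam / L ≤ HmP p ω w (minSR p lam L ω w t + 1)) :
    minSR p lam L ω w (t + 1) = t + 1 := by
  have ht : minSR p lam L ω w t = t := minSR_eq_of_alive p lam L h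
  rw [ht] at h
  apply le_antisymm (minSR_le p lam L ω w (t + 1))
  by_contra hlt
  push_neg at hlt
  have hmem : minSR p lam L ω w (t+1) ∈ _ :=
    Nat.sInf_mem (s := {u : ℕ | HmP p ω w (u + 1) < lam / L} ∪ {t+1}) ⟨t+1, Or.inr rfl⟩
  rcases hmem with hmem | hmem
  · -- minSR (t+1) < t+1, so ≤ t; if = t contradict h; if < t contradict minSR t = t
    rcases eq_or_lt_of_le (Nat.lt_succ_iff.1 hlt) with he | hlt2
    · rw [he] at hmem; exact absurd hmem (not_lt.2 h)
    · exact not_lt_of_lt_minSR p lam L (by omega : minSR p lam L ω w (t+1) < minSR p lam L ω w t) hmem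
  · simp only [Set.mem_singleton_iff] at hmem; omega

lemma minSR_succ_stopped {ω : ℕ → V} {w : V} {t : ℕ}
    (h : HmP p ω w (minSR p lam L ω w t + 1) < lam / L) :
    minSR p lam L ω w (t + 1) = minSR p lam L ω w t := by
  apply le_antisymm (Nat.sInf_le (Or.inl h))
  by_contra hlt
  push_neg at hlt
  have hmem : minSR p lam L ω w (t+1) ∈ _ :=
    Nat.sInf_mem (s := {u : ℕ | HmP p ω w (u + 1) < lam / L} ∪ {t+1}) ⟨t+1, Or.inr rfl⟩
  rcases hmem with hmem | hmem
  · exact not_lt_of_lt_minSR p lam L hlt hmem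
  · simp only [Set.mem_singleton_iff] at hmem
    have hmem' : minSR p lam L ω w (t+1) = t+1 := hmem
    have hlt' : minSR p lam L ω w (t+1) < minSR p lam L ω w t := hlt
    have := minSR_le p lam L ω w t
    omega


open scoped Classical

/-- the summand of `xiSum`. -/
noncomputable def Nw (ω : ℕ → V) (w : V) (t : ℕ) : ℝ :=
  (if ∀ i ≤ minSR p lam L ω w t, ω i ≠ w then (1 : ℝ) else 0) /
    HmP p ω w (minSR p lam L ω w t)

def actP (ω : ℕ → V) (w : V) (t : ℕ) : Prop :=
  lam / L ≤ HmP p ω w (minSR p lam L ω w t + 1) ∧ ∀ i ≤ t, ω i ≠ w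

noncomputable def Aterm (ω : ℕ → V) (w : V) (t : ℕ) : ℝ :=
  if actP p lam L ω w t then p (ω t) w / ((1 - p (ω t) w) * HmP p ω w t) else 0

noncomputable def Rterm (ω : ℕ → V) (w : V) (t : ℕ) : ℝ :=
  if actP p lam L ω w t then L / lam - 1 / HmP p ω w t else 0

section Step

variable (hlam0 : 0 < lam) (hlamL : lam ≤ L) {w : V}
  (hlampw : ∀ u, u ≠ w → p u w ≤ 1 - lam)
  {ω ω' : ℕ → V} {t : ℕ} (h1 : ∀ i ≤ t, ω' i = ω i)

include h1

lemma HmP_agree : ∀ j ≤ t + 1, HmP p ω' w j = HmP p ω w j := fun j hj =>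
  (HmP_congr p (fun i hi => (h1 i (by omega)).symm) w).symm

lemma minSR_agree : minSR p lam L ω' w t = minSR p lam L ω w t :=
  (minSR_congr p lam L (fun i hi => (h1 i (by omega)).symm) w).symm

include hlam0 hlamL hlampw

lemma stepNw :
    Nw p lam L ω' w (t + 1) = Nw p lam L ω w t +
      (if actP p lam L ω w t then
        (if ω' (t + 1) = w then -(1 / HmP p ω w t)
         else p (ω t) w / ((1 - p (ω t) w) * HmP p ω w t))
       else 0) := by
  have hcong := HmP_agree p (w := w) h1
  have hρ := minSR_agree p lam L (w := w) h1
  by_cases halive : lam / L ≤ HmP p ω w (minSR p lam L ω w t + 1)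
  · have hρt : minSR p lam L ω w t = t := minSR_eq_of_alive p lam L halive
    have halive' : lam / L ≤ HmP p ω' w (minSR p lam L ω' w t + 1) := by
      rw [hρ, hρt, hcong (t + 1) le_rfl, ← hρt]; exact halive
    have hρ' : minSR p lam L ω' w (t + 1) = t + 1 := minSR_succ_alive p lam L halive'
    have hH1 : HmP p ω' w (t + 1) = HmP p ω w t * (1 - p (ω t) w) := by
      rw [hcong (t + 1) le_rfl, HmP_succ]
    by_cases hI : ∀ i ≤ t, ω i ≠ w
    · have hact : actP p lam L ω w t := ⟨halive, hI⟩
      have hωt : ω t ≠ w := hI t le_rfl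
      have hp_le : p (ω t) w ≤ 1 - lam := hlampw _ hωt
      have hHpos : 0 < HmP p ω w t := by
        have := HmP_minSR_ge p lam L hlam0 hlamL ω w t
        rw [hρt] at this
        exact lt_of_lt_of_le (div_pos hlam0 (by linarith)) this
      have hq : 0 < 1 - p (ω t) w := by linarith
      have hNt : Nw p lam L ω w t = 1 / HmP p ω w t := by
        rw [Nw, hρt, if_pos hI]
      rw [Nw, hρ', hH1, hNt, if_pos hact]
      by_cases hv : ω' (t + 1) = w
      · rw [if_pos hv, if_neg]
        · field_simp
          ring
        · push_neg
          exact ⟨t + 1, le_rfl, hv⟩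
      · rw [if_neg hv, if_pos]
        · field_simp
          ring
        · intro i hi
          rcases Nat.lt_succ_iff_lt_or_eq.1 (Nat.lt_succ_of_le hi) with hi' | hi'
          · rw [h1 i (by omega)]; exact hI i (by omega)
          · rw [hi']; exact hv
    · have hact : ¬ actP p lam L ω w t := fun h => hI h.2
      have hNt : Nw p lam L ω w t = 0 := by
        rw [Nw, hρt, if_neg hI, zero_div]
      have hI' : ¬ ∀ i ≤ t + 1, ω' i ≠ w := by
        push_neg at hI ⊢
        obtain ⟨i, hi, hiw⟩ := hI
        exact ⟨i, by omega, by rw [h1 i hi]; exact hiw⟩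
      rw [Nw, hρ', if_neg hI', zero_div, hNt, if_neg hact]
      ring
  · have hstop : HmP p ω w (minSR p lam L ω w t + 1) < lam / L := not_le.1 halive
    have hstop' : HmP p ω' w (minSR p lam L ω' w t + 1) < lam / L := by
      rw [hρ, hcong (minSR p lam L ω w t + 1)
        (by have := minSR_le p lam L ω w t; omega)]
      exact hstop
    have hρ' : minSR p lam L ω' w (t + 1) = minSR p lam L ω w t := by
      rw [minSR_succ_stopped p lam L hstop', hρ]
    have hact : ¬ actP p lam L ω w t := fun h => absurd h.1 halive
    have hρle := minSR_le p lam L ω w t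
    rw [Nw, Nw, hρ', if_neg hact, add_zero,
      hcong (minSR p lam L ω w t) (by omega)]
    congr 1
    apply if_congr _ rfl rfl
    constructor
    · intro h i hi; rw [← h1 i (by omega)]; exact h i hi
    · intro h i hi; rw [h1 i (by omega)]; exact h i hi

omit hlam0 hlamL hlampw in
lemma actP_of_actP_succ (hact' : actP p lam L ω' w (t + 1)) : actP p lam L ω w t := by
  obtain ⟨halive', hI'⟩ := hact'
  have hcong := HmP_agree p (w := w) h1
  have hρ := minSR_agree p lam L (w := w) h1
  have halive : lam / L ≤ HmP p ω w (minSR p lam L ω w t + 1) := by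
    by_contra hno
    push_neg at hno
    have hstop' : HmP p ω' w (minSR p lam L ω' w t + 1) < lam / L := by
      rw [hρ, hcong (minSR p lam L ω w t + 1)
        (by have := minSR_le p lam L ω w t; omega)]
      exact hno
    have hρ' : minSR p lam L ω' w (t + 1) = minSR p lam L ω w t := by
      rw [minSR_succ_stopped p lam L hstop', hρ]
    rw [hρ', hcong (minSR p lam L ω w t + 1)
        (by have := minSR_le p lam L ω w t; omega)] at halive'
    exact absurd halive' (not_le.2 hno)
  exact ⟨halive, fun i hi => by rw [← h1 i hi]; exact hI' i (by omega)⟩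

lemma stepRterm :
    Rterm p lam L ω' w (t + 1) ≤ Rterm p lam L ω w t - Aterm p lam L ω w t := by
  by_cases hact : actP p lam L ω w t
  · obtain ⟨halive, hI⟩ := hact
    have hρt : minSR p lam L ω w t = t := minSR_eq_of_alive p lam L halive
    have hωt : ω t ≠ w := hI t le_rfl
    have hp_le : p (ω t) w ≤ 1 - lam := hlampw _ hωt
    have hlamLpos : 0 < lam / L := div_pos hlam0 (by linarith)
    have hHpos : 0 < HmP p ω w t := by
      have := HmP_minSR_ge p lam L hlam0 hlamL ω w t
      rw [hρt] at this; linarith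
    have hq : 0 < 1 - p (ω t) w := by linarith
    have hH1ge : lam / L ≤ HmP p ω w t * (1 - p (ω t) w) := by
      rw [← HmP_succ, ← hρt]; exact halive
    have hH1pos : 0 < HmP p ω w t * (1 - p (ω t) w) := lt_of_lt_of_le hlamLpos hH1ge
    have hkey : Rterm p lam L ω w t - Aterm p lam L ω w t
        = L / lam - 1 / (HmP p ω w t * (1 - p (ω t) w)) := by
      rw [Rterm, Aterm, if_pos ⟨halive, hI⟩, if_pos ⟨halive, hI⟩]
      field_simp
      ring
    rw [hkey]
    have hinv : 1 / (HmP p ω w t * (1 - p (ω t) w)) ≤ L / lam := by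
      rw [div_le_div_iff₀ hH1pos hlam0, one_mul]
      calc lam = (lam / L) * L := (div_mul_cancel₀ lam (by linarith : L ≠ (0:ℝ))).symm
        _ ≤ (HmP p ω w t * (1 - p (ω t) w)) * L :=
            mul_le_mul_of_nonneg_right hH1ge (by linarith)
        _ = L * (HmP p ω w t * (1 - p (ω t) w)) := by ring
    by_cases hact' : actP p lam L ω' w (t + 1)
    · have hcong := HmP_agree p (w := w) h1
      rw [Rterm, if_pos hact', hcong (t + 1) le_rfl, HmP_succ]
    · rw [Rterm, if_neg hact']
      linarith
  · have hact' : ¬ actP p lam L ω' w (t + 1) :=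
      fun h => hact (actP_of_actP_succ p lam L h1 h)
    simp [Rterm, Aterm, hact, hact']

end Step

-- NEW MATERIAL
variable (W : Finset V)

noncomputable def AA (ω : ℕ → V) (t : ℕ) : ℝ := ∑ w ∈ W, Aterm p lam L ω w t
noncomputable def RR (ω : ℕ → V) (t : ℕ) : ℝ := ∑ w ∈ W, Rterm p lam L ω w t
noncomputable def BB (ω : ℕ → V) (t : ℕ) (v : V) : ℝ :=
  if v ∈ W ∧ actP p lam L ω v t then 1 / ((1 - p (ω t) v) * HmP p ω v t) else 0

section Sums
variable (hp0 : ∀ u x : V, 0 ≤ p u x) (hlam0 : 0 < lam) (hlamL : lam ≤ L)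
  (hlamp : ∀ u w : V, w ∈ W → u ≠ w → p u w ≤ 1 - lam)

lemma xiSum_eq_sum_Nw (ω : ℕ → V) (t : ℕ) :
    xiSum p W lam L ω t = ∑ w ∈ W, Nw p lam L ω w t := rfl

-- facts under actP
include hlam0 hlamL hlamp in
lemma act_facts {ω : ℕ → V} {w : V} {t : ℕ} (hw : w ∈ W) (h : actP p lam L ω w t) :
    lam / L ≤ HmP p ω w t ∧ lam ≤ 1 - p (ω t) w ∧
      lam / L * lam ≤ (1 - p (ω t) w) * HmP p ω w t := by
  have hρt : minSR p lam L ω w t = t := minSR_eq_of_alive p lam L h.1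
  have hH : lam / L ≤ HmP p ω w t := by
    have := HmP_minSR_ge p lam L hlam0 hlamL ω w t
    rwa [hρt] at this
  have hq : lam ≤ 1 - p (ω t) w := by
    have := hlamp _ _ hw (h.2 t le_rfl)
    linarith
  refine ⟨hH, hq, ?_⟩
  calc lam / L * lam ≤ lam / L * (1 - p (ω t) w) :=
        mul_le_mul_of_nonneg_left hq (le_of_lt (div_pos hlam0 (by linarith)))
    _ ≤ HmP p ω w t * (1 - p (ω t) w) := mul_le_mul_of_nonneg_right hH (by linarith)
    _ = (1 - p (ω t) w) * HmP p ω w t := mul_comm _ _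

include hp0 hlam0 hlamL hlamp

lemma Aterm_nonneg {ω : ℕ → V} {w : V} {t : ℕ} (hw : w ∈ W) :
    0 ≤ Aterm p lam L ω w t := by
  rw [Aterm]
  split
  · rename_i h
    obtain ⟨hH, hq, hprod⟩ := act_facts p lam L W hlam0 hlamL hlamp hw h
    have h1 : 0 < lam / L * lam := mul_pos (div_pos hlam0 (by linarith)) hlam0
    exact div_nonneg (hp0 _ _) (by linarith)
  · exact le_rfl

lemma Aterm_le {ω : ℕ → V} {w : V} {t : ℕ} (hw : w ∈ W) :
    Aterm p lam L ω w t ≤ p (ω t) w * (L / lam ^ 2) := by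
  have hLpos0 : 0 < L := lt_of_lt_of_le hlam0 hlamL
  rw [Aterm]
  split
  · rename_i h
    obtain ⟨hH, hq, hprod⟩ := act_facts p lam L W hlam0 hlamL hlamp hw h
    have hLpos : 0 < L := lt_of_lt_of_le hlam0 hlamL
    have hpos : 0 < lam / L * lam := mul_pos (div_pos hlam0 hLpos) hlam0
    have hXpos : 0 < (1 - p (ω t) w) * HmP p ω w t := lt_of_lt_of_le hpos hprod
    rw [div_eq_mul_one_div]
    apply mul_le_mul_of_nonneg_left _ (hp0 _ _)
    rw [div_le_div_iff₀ hXpos (by positivity : (0:ℝ) < lam ^ 2), one_mul, mul_comm L _]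
    calc lam ^ 2 = (lam / L * lam) * L := by field_simp
      _ ≤ ((1 - p (ω t) w) * HmP p ω w t) * L :=
          mul_le_mul_of_nonneg_right hprod (le_of_lt hLpos)
  · exact mul_nonneg (hp0 _ _) (div_nonneg (le_of_lt hLpos0) (by positivity))

lemma BB_nonneg {ω : ℕ → V} {t : ℕ} (v : V) : 0 ≤ BB p lam L W ω t v := by
  rw [BB]
  split
  · rename_i h
    obtain ⟨hH, hq, hprod⟩ := act_facts p lam L W hlam0 hlamL hlamp h.1 h.2
    have hLpos : 0 < L := lt_of_lt_of_le hlam0 hlamL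
    have hpos : 0 < lam / L * lam := mul_pos (div_pos hlam0 hLpos) hlam0
    have hXpos : 0 < (1 - p (ω t) v) * HmP p ω v t := lt_of_lt_of_le hpos hprod
    exact le_of_lt (div_pos one_pos hXpos)
  · exact le_rfl

lemma BB_le {ω : ℕ → V} {t : ℕ} (v : V) : BB p lam L W ω t v ≤ L / lam ^ 2 := by
  rw [BB]
  have hLpos : 0 < L := lt_of_lt_of_le hlam0 hlamL
  split
  · rename_i h
    obtain ⟨hH, hq, hprod⟩ := act_facts p lam L W hlam0 hlamL hlamp h.1 h.2
    have hpos : 0 < lam / L * lam := mul_pos (div_pos hlam0 hLpos) hlam0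
    have hXpos : 0 < (1 - p (ω t) v) * HmP p ω v t := lt_of_lt_of_le hpos hprod
    rw [div_le_div_iff₀ hXpos (by positivity : (0:ℝ) < lam ^ 2), one_mul, mul_comm L _]
    calc lam ^ 2 = (lam / L * lam) * L := by field_simp
      _ ≤ ((1 - p (ω t) v) * HmP p ω v t) * L :=
          mul_le_mul_of_nonneg_right hprod (le_of_lt hLpos)
  · exact div_nonneg (le_of_lt hLpos) (by positivity)

lemma AA_nonneg (ω : ℕ → V) (t : ℕ) : 0 ≤ AA p lam L W ω t :=
  Finset.sum_nonneg fun w hw => Aterm_nonneg p lam L W hp0 hlam0 hlamL hlamp hw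

lemma AA_le [Fintype V] (hrow : ∀ u : V, ∑ x : V, p u x = 1) (ω : ℕ → V) (t : ℕ) :
    AA p lam L W ω t ≤ L / lam ^ 2 := by
  have h1 : AA p lam L W ω t ≤ ∑ w ∈ W, p (ω t) w * (L / lam ^ 2) :=
    Finset.sum_le_sum fun w hw => Aterm_le p lam L W hp0 hlam0 hlamL hlamp hw
  have h2 : ∑ w ∈ W, p (ω t) w ≤ 1 := by
    rw [← hrow (ω t)]
    exact Finset.sum_le_sum_of_subset_of_nonneg (Finset.subset_univ W)
      (fun x _ _ => hp0 _ _)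
  have hc : (0:ℝ) ≤ L / lam ^ 2 :=
    div_nonneg (le_of_lt (lt_of_lt_of_le hlam0 hlamL)) (by positivity)
  calc AA p lam L W ω t ≤ ∑ w ∈ W, p (ω t) w * (L / lam ^ 2) := h1
    _ = (∑ w ∈ W, p (ω t) w) * (L / lam ^ 2) := (Finset.sum_mul _ _ _).symm
    _ ≤ 1 * (L / lam ^ 2) := mul_le_mul_of_nonneg_right h2 hc
    _ = L / lam ^ 2 := one_mul _

lemma sum_pBB [Fintype V] (ω : ℕ → V) (t : ℕ) :
    ∑ v : V, p (ω t) v * BB p lam L W ω t v = AA p lam L W ω t := by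
  rw [AA, ← Finset.sum_subset (Finset.subset_univ W)
    (fun v _ hv => by rw [BB, if_neg (fun h => hv h.1), mul_zero])]
  apply Finset.sum_congr rfl
  intro w hw
  rw [BB, Aterm]
  by_cases hact : actP p lam L ω w t
  · rw [if_pos ⟨hw, hact⟩, if_pos hact, mul_one_div]
  · rw [if_neg (fun h => hact h.2), if_neg hact, mul_zero]

lemma xi_step {ω ω' : ℕ → V} {t : ℕ} (h1 : ∀ i ≤ t, ω' i = ω i) :
    xiSum p W lam L ω' (t + 1) = xiSum p W lam L ω t +
      (AA p lam L W ω t - BB p lam L W ω t (ω' (t + 1))) := by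
  rw [xiSum_eq_sum_Nw, xiSum_eq_sum_Nw]
  have hstep : ∀ w ∈ W, Nw p lam L ω' w (t + 1) = Nw p lam L ω w t +
      (Aterm p lam L ω w t -
        (if w = ω' (t + 1) then BB p lam L W ω t (ω' (t + 1)) else 0)) := by
    intro w hw
    rw [stepNw p lam L hlam0 hlamL (fun u hu => hlamp u w hw hu) h1]
    congr 1
    rcases eq_or_ne (ω' (t + 1)) w with hv | hv
    · subst hv
      by_cases hact : actP p lam L ω (ω' (t + 1)) t
      · obtain ⟨hH, hq, hprod⟩ := act_facts p lam L W hlam0 hlamL hlamp hw hact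
        have hLpos : 0 < L := lt_of_lt_of_le hlam0 hlamL
        have hpos : 0 < lam / L * lam := mul_pos (div_pos hlam0 hLpos) hlam0
        have hXpos : 0 < (1 - p (ω t) (ω' (t + 1))) * HmP p ω (ω' (t + 1)) t :=
          lt_of_lt_of_le hpos hprod
        have hqne : 1 - p (ω t) (ω' (t + 1)) ≠ 0 := by
          intro h0; rw [h0, zero_mul] at hXpos; exact lt_irrefl _ hXpos
        have hHne : HmP p ω (ω' (t + 1)) t ≠ 0 := by
          intro h0; rw [h0, mul_zero] at hXpos; exact lt_irrefl _ hXpos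
        simp only [Aterm, BB, hact, hw, if_true, and_self, if_pos]
        field_simp
        ring
      · simp [Aterm, BB, hact]
    · simp [Aterm, BB, hv, Ne.symm hv]
  rw [Finset.sum_congr rfl hstep, Finset.sum_add_distrib, Finset.sum_sub_distrib,
    Finset.sum_ite_eq' W (ω' (t + 1)) (fun _ => BB p lam L W ω t (ω' (t + 1)))]
  congr 1
  rw [AA]
  by_cases hmem : ω' (t + 1) ∈ W
  · rw [if_pos hmem]
  · rw [if_neg hmem, BB, if_neg (fun h => hmem h.1), sub_zero]

lemma RR_step {ω ω' : ℕ → V} {t : ℕ} (h1 : ∀ i ≤ t, ω' i = ω i) :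
    RR p lam L W ω' (t + 1) ≤ RR p lam L W ω t - AA p lam L W ω t := by
  rw [RR, RR, AA, ← Finset.sum_sub_distrib]
  exact Finset.sum_le_sum fun w hw =>
    stepRterm p lam L hlam0 hlamL (fun u hu => hlamp u w hw hu) h1

lemma Rterm_nonneg {ω : ℕ → V} {w : V} {t : ℕ} (hw : w ∈ W) :
    0 ≤ Rterm p lam L ω w t := by
  rw [Rterm]
  split
  · rename_i h
    obtain ⟨hH, hq, hprod⟩ := act_facts p lam L W hlam0 hlamL hlamp hw h
    have hLpos : 0 < L := lt_of_lt_of_le hlam0 hlamL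
    have hHpos : 0 < HmP p ω w t := lt_of_lt_of_le (div_pos hlam0 hLpos) hH
    have : 1 / HmP p ω w t ≤ L / lam := by
      rw [div_le_div_iff₀ hHpos hlam0, one_mul]
      calc lam = (lam / L) * L := (div_mul_cancel₀ lam (ne_of_gt hLpos)).symm
        _ ≤ HmP p ω w t * L := mul_le_mul_of_nonneg_right hH (le_of_lt hLpos)
        _ = L * HmP p ω w t := mul_comm _ _
    linarith
  · exact le_rfl

lemma Rterm_le {ω : ℕ → V} {w : V} {t : ℕ} (hw : w ∈ W) :
    Rterm p lam L ω w t ≤ L / lam := by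
  rw [Rterm]
  have hLpos : 0 < L := lt_of_lt_of_le hlam0 hlamL
  split
  · rename_i h
    obtain ⟨hH, hq, hprod⟩ := act_facts p lam L W hlam0 hlamL hlamp hw h
    have hHpos : 0 < HmP p ω w t := lt_of_lt_of_le (div_pos hlam0 hLpos) hH
    have : 0 ≤ 1 / HmP p ω w t := by positivity
    linarith
  · exact div_nonneg (le_of_lt hLpos) (le_of_lt hlam0)

lemma RR_nonneg (ω : ℕ → V) (t : ℕ) : 0 ≤ RR p lam L W ω t :=
  Finset.sum_nonneg fun w hw => Rterm_nonneg p lam L W hp0 hlam0 hlamL hlamp hw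

lemma RR_le (ω : ℕ → V) (t : ℕ) : RR p lam L W ω t ≤ (W.card : ℝ) * (L / lam) := by
  rw [RR]
  calc ∑ w ∈ W, Rterm p lam L ω w t ≤ ∑ _w ∈ W, (L / lam) :=
      Finset.sum_le_sum fun w hw => Rterm_le p lam L W hp0 hlam0 hlamL hlamp hw
    _ = (W.card : ℝ) * (L / lam) := by rw [Finset.sum_const, nsmul_eq_mul]

lemma Nw_nonneg (ω : ℕ → V) (w : V) (t : ℕ) : 0 ≤ Nw p lam L ω w t := by
  have hLpos : 0 < L := lt_of_lt_of_le hlam0 hlamL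
  have hH : 0 < HmP p ω w (minSR p lam L ω w t) :=
    lt_of_lt_of_le (div_pos hlam0 hLpos) (HmP_minSR_ge p lam L hlam0 hlamL ω w t)
  rw [Nw]
  split
  · positivity
  · rw [zero_div]

lemma Nw_le (ω : ℕ → V) (w : V) (t : ℕ) : Nw p lam L ω w t ≤ L / lam := by
  have hLpos : 0 < L := lt_of_lt_of_le hlam0 hlamL
  have hge := HmP_minSR_ge p lam L hlam0 hlamL ω w t
  have hH : 0 < HmP p ω w (minSR p lam L ω w t) :=
    lt_of_lt_of_le (div_pos hlam0 hLpos) hge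
  have hinv : 1 / HmP p ω w (minSR p lam L ω w t) ≤ L / lam := by
    rw [div_le_div_iff₀ hH hlam0, one_mul]
    calc lam = (lam / L) * L := (div_mul_cancel₀ lam (ne_of_gt hLpos)).symm
      _ ≤ HmP p ω w (minSR p lam L ω w t) * L :=
          mul_le_mul_of_nonneg_right hge (le_of_lt hLpos)
      _ = L * HmP p ω w (minSR p lam L ω w t) := mul_comm _ _
  rw [Nw]
  split
  · exact hinv
  · rw [zero_div]; positivity

lemma xiSum_nonneg (ω : ℕ → V) (t : ℕ) : 0 ≤ xiSum p W lam L ω t := by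
  rw [xiSum_eq_sum_Nw]
  exact Finset.sum_nonneg fun w _ => Nw_nonneg p lam L W hp0 hlam0 hlamL hlamp ω w t

lemma xiSum_le (ω : ℕ → V) (t : ℕ) : xiSum p W lam L ω t ≤ (W.card : ℝ) * (L / lam) := by
  rw [xiSum_eq_sum_Nw]
  calc ∑ w ∈ W, Nw p lam L ω w t ≤ ∑ _w ∈ W, (L / lam) :=
      Finset.sum_le_sum fun w _ => Nw_le p lam L W hp0 hlam0 hlamL hlamp ω w t
    _ = (W.card : ℝ) * (L / lam) := by rw [Finset.sum_const, nsmul_eq_mul]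

lemma xiSum_zero {ω : ℕ → V} (hv₀ : ω 0 ∉ W) : xiSum p W lam L ω 0 = W.card := by
  rw [xiSum_eq_sum_Nw]
  have : ∀ w ∈ W, Nw p lam L ω w 0 = 1 := by
    intro w hw
    have hρ : minSR p lam L ω w 0 = 0 := Nat.le_zero.1 (minSR_le p lam L ω w 0)
    rw [Nw, hρ, HmP_zero, if_pos, div_one]
    intro i hi
    rw [Nat.le_zero.1 hi]
    intro h
    exact hv₀ (h ▸ hw)
  rw [Finset.sum_congr rfl this, Finset.sum_const, nsmul_eq_mul, mul_one]

end Sums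

lemma exp_quad {z : ℝ} (h : |z| ≤ 1) : Real.exp z ≤ 1 + z + 2 * z ^ 2 := by
  have h2 := Real.exp_bound h (n := 2) (by norm_num)
  have h3 : ∑ m ∈ Finset.range 2, z ^ m / (Nat.factorial m) = 1 + z := by
    simp [Finset.sum_range_succ]
  rw [h3] at h2
  have h4 := (abs_le.1 h2).2
  have h5 : |z| ^ 2 = z ^ 2 := sq_abs z
  have h6 : ((2:ℕ).succ : ℝ) / ((Nat.factorial 2 : ℕ) * (2:ℕ)) = 3 / 4 := by
    norm_num [Nat.factorial]
  rw [h5, h6] at h4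
  nlinarith [sq_nonneg z]

-- abstract one-step bound
lemma exp_step_abstract {V : Type*} [Fintype V] (q : V → ℝ) (hq0 : ∀ v, 0 ≤ q v)
    (hq1 : ∑ v : V, q v = 1) (B : V → ℝ) (A c θ : ℝ)
    (hA0 : 0 ≤ A) (hAc : A ≤ c) (hB0 : ∀ v, 0 ≤ B v) (hBc : ∀ v, B v ≤ c)
    (hsum : ∑ v : V, q v * B v = A) (hθ : |θ| * c ≤ 1) :
    ∑ v : V, q v * Real.exp (θ * (A - B v)) ≤ Real.exp (2 * θ ^ 2 * c * A) := by
  have habs : ∀ v, |θ * (A - B v)| ≤ 1 := by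
    intro v
    rw [abs_mul]
    refine le_trans (mul_le_mul_of_nonneg_left ?_ (abs_nonneg θ)) hθ
    rw [abs_le]
    constructor
    · have := hBc v; linarith
    · have := hB0 v; linarith
  have hpt : ∀ v, q v * Real.exp (θ * (A - B v)) ≤
      q v * (1 + θ * (A - B v) + 2 * (θ * (A - B v)) ^ 2) := fun v =>
    mul_le_mul_of_nonneg_left (exp_quad (habs v)) (hq0 v)
  have hexpand : ∀ v, q v * (1 + θ * (A - B v) + 2 * (θ * (A - B v)) ^ 2) =
      q v * (1 + θ * A + 2 * θ ^ 2 * A ^ 2) - (q v * B v) * (θ + 4 * θ ^ 2 * A) +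
        (q v * B v * B v) * (2 * θ ^ 2) := by
    intro v; ring
  have hS2 : ∑ v : V, q v * B v * B v ≤ c * A := by
    calc ∑ v : V, q v * B v * B v ≤ ∑ v : V, q v * B v * c :=
        Finset.sum_le_sum fun v _ =>
          mul_le_mul_of_nonneg_left (hBc v) (mul_nonneg (hq0 v) (hB0 v))
      _ = (∑ v : V, q v * B v) * c := (Finset.sum_mul _ _ _).symm
      _ = A * c := by rw [hsum]
      _ = c * A := mul_comm _ _
  calc ∑ v : V, q v * Real.exp (θ * (A - B v))
      ≤ ∑ v : V, q v * (1 + θ * (A - B v) + 2 * (θ * (A - B v)) ^ 2) :=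
        Finset.sum_le_sum fun v _ => hpt v
    _ = ∑ v : V, (q v * (1 + θ * A + 2 * θ ^ 2 * A ^ 2) -
          (q v * B v) * (θ + 4 * θ ^ 2 * A) + (q v * B v * B v) * (2 * θ ^ 2)) :=
        Finset.sum_congr rfl fun v _ => hexpand v
    _ = (∑ v : V, q v) * (1 + θ * A + 2 * θ ^ 2 * A ^ 2) -
          (∑ v : V, q v * B v) * (θ + 4 * θ ^ 2 * A) +
          (∑ v : V, q v * B v * B v) * (2 * θ ^ 2) := by
        rw [Finset.sum_add_distrib, Finset.sum_sub_distrib, ← Finset.sum_mul,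
          ← Finset.sum_mul, ← Finset.sum_mul]
    _ = 1 + 2 * θ ^ 2 * ((∑ v : V, q v * B v * B v) - A ^ 2) := by
        rw [hq1, hsum]; ring
    _ ≤ 1 + 2 * θ ^ 2 * c * A := by nlinarith [hS2, sq_nonneg A, sq_nonneg θ]
    _ ≤ Real.exp (2 * θ ^ 2 * c * A) := by
        have := Real.add_one_le_exp (2 * θ ^ 2 * c * A)
        linarith


noncomputable def Phi {V : Type*} [Fintype V] (p : V → V → ℝ) (s t : ℕ)
    (g : (Fin (s + 1) → V) → ℝ) (x : Fin (s + 1) → V) : ℝ :=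
  ∑ y : Fin (s + 1) → V,
    (if ∀ i : Fin (s + 1), (i : ℕ) ≤ t → y i = x i then
        ∏ i ∈ Finset.univ.filter (fun i : Fin s => t ≤ (i : ℕ)),
          p (y i.castSucc) (y i.succ)
      else 0) * g y

variable [Fintype V]

lemma Phi_last (s : ℕ) (g : (Fin (s + 1) → V) → ℝ) (x : Fin (s + 1) → V) :
    Phi p s s g x = g x := by
  rw [Phi]
  have h2 : Finset.univ.filter (fun i : Fin s => s ≤ (i : ℕ)) = ∅ := by
    apply Finset.filter_eq_empty_iff.2
    intro i _
    exact not_le.2 i.isLt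
  have h3 : ∀ y : Fin (s + 1) → V,
      (if ∀ i : Fin (s + 1), (i : ℕ) ≤ s → y i = x i then
          ∏ i ∈ Finset.univ.filter (fun i : Fin s => s ≤ (i : ℕ)),
            p (y i.castSucc) (y i.succ)
        else 0) * g y = if y = x then g y else 0 := by
    intro y
    rw [h2, Finset.prod_empty]
    by_cases hc : y = x
    · rw [if_pos hc, if_pos, one_mul]
      intro i _
      rw [hc]
    · rw [if_neg hc, if_neg, zero_mul]
      intro hall
      exact hc (funext fun i => hall i (by omega))
  rw [Finset.sum_congr rfl fun y _ => h3 y, Finset.sum_ite_eq' Finset.univ x g,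
    if_pos (Finset.mem_univ x)]

lemma Phi_rec (s t : ℕ) (ht : t < s) (g : (Fin (s + 1) → V) → ℝ) (x : Fin (s + 1) → V) :
    Phi p s t g x = ∑ v : V, p (x ⟨t, by omega⟩) v *
      Phi p s (t + 1) g (Function.update x ⟨t + 1, by omega⟩ v) := by
  have hsplit : Finset.univ.filter (fun i : Fin s => t ≤ (i : ℕ)) =
      insert ⟨t, ht⟩ (Finset.univ.filter (fun i : Fin s => t + 1 ≤ (i : ℕ))) := by
    ext i
    simp only [Finset.mem_filter, Finset.mem_univ, true_and, Finset.mem_insert, Fin.ext_iff]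
    omega
  have hnotmem : (⟨t, ht⟩ : Fin s) ∉
      Finset.univ.filter (fun i : Fin s => t + 1 ≤ (i : ℕ)) := by
    simp
  rw [Phi]
  have hr : ∀ v : V, p (x ⟨t, by omega⟩) v *
      Phi p s (t + 1) g (Function.update x ⟨t + 1, by omega⟩ v) =
      ∑ y : Fin (s + 1) → V, p (x ⟨t, by omega⟩) v *
        ((if ∀ i : Fin (s + 1), (i : ℕ) ≤ t + 1 →
            y i = Function.update x ⟨t + 1, by omega⟩ v i then
          ∏ i ∈ Finset.univ.filter (fun i : Fin s => t + 1 ≤ (i : ℕ)),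
            p (y i.castSucc) (y i.succ)
        else 0) * g y) := fun v => by rw [Phi, Finset.mul_sum]
  rw [Finset.sum_congr rfl fun v (_ : v ∈ Finset.univ) => hr v, Finset.sum_comm]
  apply Finset.sum_congr rfl
  intro y _
  -- inner sum over v collapses at v = y ⟨t+1⟩
  rw [Finset.sum_eq_single (y ⟨t + 1, by omega⟩)]
  · -- main term
    by_cases hC : ∀ i : Fin (s + 1), (i : ℕ) ≤ t → y i = x i
    · have hC' : ∀ i : Fin (s + 1), (i : ℕ) ≤ t + 1 →
          y i = Function.update x ⟨t + 1, by omega⟩ (y ⟨t + 1, by omega⟩) i := by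
        intro i hi
        rcases Nat.lt_succ_iff_lt_or_eq.1 (Nat.lt_succ_of_le hi) with hi' | hi'
        · rw [Function.update_of_ne (by simp [Fin.ext_iff]; omega)]
          exact hC i (by omega)
        · have : i = ⟨t + 1, by omega⟩ := Fin.ext hi'
          rw [this, Function.update_self]
      rw [if_pos hC, if_pos hC', hsplit, Finset.prod_insert hnotmem]
      have hyx : y ((⟨t, ht⟩ : Fin s).castSucc) = x ⟨t, by omega⟩ := by
        have : ((⟨t, ht⟩ : Fin s).castSucc : Fin (s + 1)) = ⟨t, by omega⟩ := by
          simp [Fin.ext_iff]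
        rw [this]
        exact hC _ (by simp)
      have hsucc : ((⟨t, ht⟩ : Fin s).succ : Fin (s + 1)) = ⟨t + 1, by omega⟩ := by
        simp [Fin.ext_iff]
      rw [hsucc, hyx]
      ring
    · rw [if_neg hC, if_neg (fun hC' => hC fun i hi => by
        rw [hC' i (by omega), Function.update_of_ne (by simp [Fin.ext_iff]; omega)])]
      ring
  · intro v _ hv
    rw [if_neg (fun hC' => hv
      (((hC' ⟨t + 1, by omega⟩ (by simp)).trans (Function.update_self _ _ _)).symm))]
    ring
  · intro h
    exact absurd (Finset.mem_univ _) h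

lemma Phi_zero (s : ℕ) (g : (Fin (s + 1) → V) → ℝ) (v₀ : V) :
    Phi p s 0 g (fun _ => v₀) =
      ∑ y : Fin (s + 1) → V, (if y 0 = v₀ then
        (∏ i : Fin s, p (y i.castSucc) (y i.succ)) * g y else 0) := by
  rw [Phi]
  apply Finset.sum_congr rfl
  intro y _
  have hfilter : Finset.univ.filter (fun i : Fin s => 0 ≤ (i : ℕ)) = Finset.univ :=
    Finset.filter_true_of_mem fun i _ => Nat.zero_le _
  have hcond : (∀ i : Fin (s + 1), (i : ℕ) ≤ 0 → y i = v₀) ↔ y 0 = v₀ := by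
    constructor
    · intro h; exact h 0 (by simp)
    · intro h i hi
      have : i = 0 := by
        apply Fin.ext
        simpa using Nat.le_zero.1 hi
      rw [this, h]
  rw [if_congr hcond rfl rfl, hfilter, ite_mul, zero_mul]


-- NEW
def cap {V : Type*} (s : ℕ) (x : Fin (s + 1) → V) : ℕ → V :=
  fun t => x ⟨min t s, by omega⟩

lemma cap_eq {s : ℕ} (x : Fin (s + 1) → V) {t : ℕ} (ht : t ≤ s) :
    cap s x t = x ⟨t, by omega⟩ := by
  unfold cap
  congr 1
  exact Fin.ext (by simp [ht])

lemma cap_update_agree {s t : ℕ} (ht : t < s) (x : Fin (s + 1) → V) (v : V) :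
    ∀ i ≤ t, cap s (Function.update x ⟨t + 1, by omega⟩ v) i = cap s x i := by
  intro i hi
  rw [cap_eq _ (by omega), cap_eq _ (by omega),
    Function.update_of_ne (by simp [Fin.ext_iff]; omega)]

lemma cap_update_succ {s t : ℕ} (ht : t < s) (x : Fin (s + 1) → V) (v : V) :
    cap s (Function.update x ⟨t + 1, by omega⟩ v) (t + 1) = v := by
  rw [cap_eq _ (by omega)]
  exact Function.update_self _ _ _

theorem Phi_le (hp0 : ∀ u x : V, 0 ≤ p u x) (hrow : ∀ u : V, ∑ x : V, p u x = 1)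
    (hlam0 : 0 < lam) (hlamL : lam ≤ L)
    (hlamp : ∀ u w : V, w ∈ W → u ≠ w → p u w ≤ 1 - lam)
    (s : ℕ) (θ : ℝ) (hθ : |θ| * (L / lam ^ 2) ≤ 1) :
    ∀ k t, t + k = s → ∀ x : Fin (s + 1) → V,
      Phi p s t (fun y => Real.exp (θ * xiSum p W lam L (cap s y) s)) x ≤
        Real.exp (θ * xiSum p W lam L (cap s x) t +
          2 * θ ^ 2 * (L / lam ^ 2) * RR p lam L W (cap s x) t) := by
  intro k
  induction k with
  | zero =>
      intro t htk x
      have hts : t = s := by omega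
      subst hts
      rw [Phi_last]
      apply Real.exp_le_exp.2
      have h1 : 0 ≤ 2 * θ ^ 2 * (L / lam ^ 2) * RR p lam L W (cap t x) t :=
        mul_nonneg (mul_nonneg (by positivity)
          (div_nonneg (by linarith) (by positivity))) (RR_nonneg p lam L W hp0 hlam0 hlamL hlamp (cap t x) t)
      linarith
  | succ k ih =>
      intro t htk x
      have ht : t < s := by omega
      rw [Phi_rec p s t ht]
      set ξ := xiSum p W lam L (cap s x) t with hξ
      set R := RR p lam L W (cap s x) t with hR
      set A := AA p lam L W (cap s x) t with hA
      set c := L / lam ^ 2 with hc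
      have hcpos : 0 ≤ c := by
        rw [hc]
        exact div_nonneg (by linarith) (by positivity)
      have hstep : ∀ v : V, p (x ⟨t, by omega⟩) v *
          Phi p s (t + 1) (fun y => Real.exp (θ * xiSum p W lam L (cap s y) s))
            (Function.update x ⟨t + 1, by omega⟩ v)
          ≤ p (x ⟨t, by omega⟩) v *
            (Real.exp (θ * ξ + 2 * θ ^ 2 * c * R - 2 * θ ^ 2 * c * A) *
              Real.exp (θ * (A - BB p lam L W (cap s x) t v))) := by
        intro v
        apply mul_le_mul_of_nonneg_left _ (hp0 _ _)
        refine le_trans (ih (t + 1) (by omega) (Function.update x ⟨t + 1, by omega⟩ v)) ?_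
        rw [← Real.exp_add]
        apply Real.exp_le_exp.2
        have hxi : xiSum p W lam L (cap s (Function.update x ⟨t + 1, by omega⟩ v)) (t + 1)
            = ξ + (A - BB p lam L W (cap s x) t v) := by
          rw [xi_step p lam L W hp0 hlam0 hlamL hlamp (cap_update_agree ht x v), cap_update_succ ht x v, hξ, hA]
        have hRR : RR p lam L W (cap s (Function.update x ⟨t + 1, by omega⟩ v)) (t + 1)
            ≤ R - A := by
          rw [hR, hA]
          exact RR_step p lam L W hp0 hlam0 hlamL hlamp (cap_update_agree ht x v)
        have h2 : 2 * θ ^ 2 * c *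
            RR p lam L W (cap s (Function.update x ⟨t + 1, by omega⟩ v)) (t + 1) ≤
            2 * θ ^ 2 * c * (R - A) :=
          mul_le_mul_of_nonneg_left hRR (by positivity)
        rw [hxi]
        ring_nf
        ring_nf at h2
        linarith
      calc ∑ v : V, p (x ⟨t, by omega⟩) v *
            Phi p s (t + 1) (fun y => Real.exp (θ * xiSum p W lam L (cap s y) s))
              (Function.update x ⟨t + 1, by omega⟩ v)
          ≤ ∑ v : V, p (x ⟨t, by omega⟩) v *
            (Real.exp (θ * ξ + 2 * θ ^ 2 * c * R - 2 * θ ^ 2 * c * A) *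
              Real.exp (θ * (A - BB p lam L W (cap s x) t v))) :=
            Finset.sum_le_sum fun v _ => hstep v
        _ = Real.exp (θ * ξ + 2 * θ ^ 2 * c * R - 2 * θ ^ 2 * c * A) *
            ∑ v : V, p (x ⟨t, by omega⟩) v *
              Real.exp (θ * (A - BB p lam L W (cap s x) t v)) := by
            rw [Finset.mul_sum]
            exact Finset.sum_congr rfl fun v _ => by ring
        _ ≤ Real.exp (θ * ξ + 2 * θ ^ 2 * c * R - 2 * θ ^ 2 * c * A) *
            Real.exp (2 * θ ^ 2 * c * A) := by
            apply mul_le_mul_of_nonneg_left _ (le_of_lt (Real.exp_pos _))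
            have hq : ∀ v, p (x ⟨t, by omega⟩) v = p (cap s x t) v := by
              intro v
              rw [cap_eq x (by omega : t ≤ s)]
            have hsum := sum_pBB p lam L W hp0 hlam0 hlamL hlamp (cap s x) t
            refine le_trans (le_of_eq ?_)
              (exp_step_abstract (fun v => p (cap s x t) v)
                (fun v => hp0 _ _) (hrow _) (fun v => BB p lam L W (cap s x) t v)
                A c θ (AA_nonneg p lam L W hp0 hlam0 hlamL hlamp _ _)
                (by rw [hA, hc]; exact AA_le p lam L W hp0 hlam0 hlamL hlamp hrow _ _)
                (fun v => BB_nonneg p lam L W hp0 hlam0 hlamL hlamp v)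
                (fun v => by rw [hc]; exact BB_le p lam L W hp0 hlam0 hlamL hlamp v)
                (by rw [hA]; exact hsum) hθ)
            exact Finset.sum_congr rfl fun v _ => by rw [hq v]
        _ = Real.exp (θ * ξ + 2 * θ ^ 2 * c * R) := by
            rw [← Real.exp_add]
            ring_nf

end Everything
end XiAux

open XiAux in
open scoped Classical in
set_option maxHeartbeats 1000000 in
theorem xiSum_concentration {V : Type*} [Fintype V]
    (p : V → V → ℝ) (hp0 : ∀ u x : V, 0 ≤ p u x) (hp1 : ∀ u x : V, p u x ≤ 1)
    (hrow : ∀ u : V, ∑ x : V, p u x = 1)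
    (W : Finset V) (m : ℕ) (hm : W.card = m)
    (lam L : ℝ) (hlam0 : 0 < lam) (hlam1 : lam ≤ 1) (hL : 1 ≤ L)
    (hlamp : ∀ u w : V, w ∈ W → u ≠ w → p u w ≤ 1 - lam)
    (v₀ : V) (hv₀ : v₀ ∉ W) (ϑ : ℝ) (hϑ : 0 < ϑ) (s : ℕ) :
    (∑ x : Fin (s + 1) → V,
        if x 0 = v₀ ∧
            ϑ * m < |xiSum p W lam L (fun t => x ⟨min t s, by omega⟩) s - m| then
          ∏ i : Fin s, p (x i.castSucc) (x i.succ)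
        else 0)
      ≤ 2 * Real.exp (-(ϑ ^ 2 * lam ^ 4 * m) / (8 * L) ^ 2) := by
  have hlamL : lam ≤ L := le_trans hlam1 hL
  have hLpos : 0 < L := lt_of_lt_of_le hlam0 hlamL
  have hmW : (W.card : ℝ) = (m : ℝ) := by rw [hm]
  have hm0 : (0:ℝ) ≤ (m:ℝ) := Nat.cast_nonneg m
  have hwt0 : ∀ x : Fin (s + 1) → V, 0 ≤ ∏ i : Fin s, p (x i.castSucc) (x i.succ) :=
    fun x => Finset.prod_nonneg fun i _ => hp0 _ _
  show (∑ x : Fin (s + 1) → V,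
      if x 0 = v₀ ∧ ϑ * m < |xiSum p W lam L (cap s x) s - m| then
        ∏ i : Fin s, p (x i.castSucc) (x i.succ)
      else 0) ≤ 2 * Real.exp (-(ϑ ^ 2 * lam ^ 4 * m) / (8 * L) ^ 2)
  by_cases hcase : ϑ ≤ L / lam
  · -- main case
    set c := L / lam ^ 2 with hc
    set θ := ϑ * lam ^ 3 / (4 * L ^ 2) with hθdef
    have hθpos : 0 < θ := by positivity
    have hθc : θ * c = ϑ * lam / (4 * L) := by
      rw [hθdef, hc]
      field_simp
    have hϑlam : ϑ * lam ≤ L := by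
      calc ϑ * lam ≤ (L / lam) * lam := mul_le_mul_of_nonneg_right hcase (le_of_lt hlam0)
        _ = L := div_mul_cancel₀ L (ne_of_gt hlam0)
    have hθc1 : |θ| * c ≤ 1 := by
      rw [abs_of_pos hθpos, hθc]
      rw [div_le_one (by positivity)]
      linarith
    have hθc1' : |(-θ)| * c ≤ 1 := by rwa [abs_neg]
    -- MGF bound for η = ±θ
    have key : ∀ η : ℝ, |η| * c ≤ 1 →
        (∑ y : Fin (s + 1) → V, (if y 0 = v₀ then
          (∏ i : Fin s, p (y i.castSucc) (y i.succ)) *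
            Real.exp (η * xiSum p W lam L (cap s y) s) else 0))
        ≤ Real.exp (η * m + 2 * η ^ 2 * c * ((m : ℝ) * (L / lam))) := by
      intro η hη
      have h0 := Phi_le p lam L W hp0 hrow hlam0 hlamL hlamp s η (by rwa [← hc]) s 0 (by omega) (fun _ => v₀)
      rw [Phi_zero] at h0
      refine le_trans h0 (Real.exp_le_exp.2 ?_)
      have hcap0 : cap s (fun _ => v₀ : Fin (s + 1) → V) 0 = v₀ := cap_eq _ (by omega)
      have hξ0 : xiSum p W lam L (cap s (fun _ => v₀ : Fin (s + 1) → V)) 0 = (m : ℝ) := by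
        rw [xiSum_zero p lam L W hp0 hlam0 hlamL hlamp (by rw [hcap0]; exact hv₀), hmW]
      have hRR0 : RR p lam L W (cap s (fun _ => v₀ : Fin (s + 1) → V)) 0 ≤ (m : ℝ) * (L / lam) := by
        refine le_trans (RR_le p lam L W hp0 hlam0 hlamL hlamp _ _) ?_
        rw [hmW]
      have hcc : (0:ℝ) ≤ 2 * η ^ 2 * c := by
        rw [hc]; positivity
      have := mul_le_mul_of_nonneg_left hRR0 hcc
      rw [hξ0]
      linarith
    -- pointwise bound on the indicator
    have hpt : ∀ x : Fin (s + 1) → V,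
        (if x 0 = v₀ ∧ ϑ * m < |xiSum p W lam L (cap s x) s - m| then
          ∏ i : Fin s, p (x i.castSucc) (x i.succ) else 0)
        ≤ Real.exp (-(θ * (ϑ * m)) - θ * m) *
            (if x 0 = v₀ then (∏ i : Fin s, p (x i.castSucc) (x i.succ)) *
              Real.exp (θ * xiSum p W lam L (cap s x) s) else 0) +
          Real.exp (-(θ * (ϑ * m)) + θ * m) *
            (if x 0 = v₀ then (∏ i : Fin s, p (x i.castSucc) (x i.succ)) *
              Real.exp (-θ * xiSum p W lam L (cap s x) s) else 0) := by
      intro x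
      set wt := ∏ i : Fin s, p (x i.castSucc) (x i.succ) with hwt
      set ξ := xiSum p W lam L (cap s x) s with hξs
      by_cases hcond : x 0 = v₀ ∧ ϑ * m < |ξ - m|
      · rw [if_pos hcond, if_pos hcond.1, if_pos hcond.1]
        have e1 : Real.exp (-(θ * (ϑ * m)) - θ * m) * (wt * Real.exp (θ * ξ)) =
            wt * Real.exp (θ * (ξ - m) - θ * (ϑ * m)) := by
          calc Real.exp (-(θ * (ϑ * m)) - θ * m) * (wt * Real.exp (θ * ξ))
              = wt * (Real.exp (-(θ * (ϑ * m)) - θ * m) * Real.exp (θ * ξ)) := by ring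
            _ = wt * Real.exp (-(θ * (ϑ * m)) - θ * m + θ * ξ) := by rw [← Real.exp_add]
            _ = wt * Real.exp (θ * (ξ - m) - θ * (ϑ * m)) := by congr 1; ring
        have e2 : Real.exp (-(θ * (ϑ * m)) + θ * m) * (wt * Real.exp (-θ * ξ)) =
            wt * Real.exp (-(θ * (ξ - m)) - θ * (ϑ * m)) := by
          calc Real.exp (-(θ * (ϑ * m)) + θ * m) * (wt * Real.exp (-θ * ξ))
              = wt * (Real.exp (-(θ * (ϑ * m)) + θ * m) * Real.exp (-θ * ξ)) := by ring
            _ = wt * Real.exp (-(θ * (ϑ * m)) + θ * m + -θ * ξ) := by rw [← Real.exp_add]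
            _ = wt * Real.exp (-(θ * (ξ - m)) - θ * (ϑ * m)) := by congr 1; ring
        rw [e1, e2]
        rcases le_or_gt (m : ℝ) ξ with hge | hlt
        · have habs : |ξ - m| = ξ - m := abs_of_nonneg (by linarith)
          have h1 : (1:ℝ) ≤ Real.exp (θ * (ξ - m) - θ * (ϑ * m)) := by
            rw [Real.one_le_exp_iff]
            rw [habs] at hcond
            nlinarith [hcond.2]
          linarith [mul_nonneg (hwt0 x) (le_of_lt (Real.exp_pos (-(θ * (ξ - m)) - θ * (ϑ * m)))),
            mul_le_mul_of_nonneg_left h1 (hwt0 x)]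
        · have habs : |ξ - m| = -(ξ - m) := abs_of_neg (by linarith)
          have h1 : (1:ℝ) ≤ Real.exp (-(θ * (ξ - m)) - θ * (ϑ * m)) := by
            rw [Real.one_le_exp_iff]
            rw [habs] at hcond
            nlinarith [hcond.2]
          linarith [mul_nonneg (hwt0 x) (le_of_lt (Real.exp_pos (θ * (ξ - m) - θ * (ϑ * m)))),
            mul_le_mul_of_nonneg_left h1 (hwt0 x)]
      · rw [if_neg hcond]
        apply add_nonneg <;>
        · apply mul_nonneg (le_of_lt (Real.exp_pos _))
          split
          · exact mul_nonneg (hwt0 x) (le_of_lt (Real.exp_pos _))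
          · exact le_rfl
    -- sum up
    have hsum := Finset.sum_le_sum fun x (_ : x ∈ Finset.univ) => hpt x
    rw [Finset.sum_add_distrib, ← Finset.mul_sum, ← Finset.mul_sum] at hsum
    have hkeyp := key θ hθc1
    have hkeym := key (-θ) hθc1'
    have hD : 2 * θ ^ 2 * c * ((m : ℝ) * (L / lam)) = θ * (ϑ * m) / 2 := by
      rw [hθdef, hc]
      field_simp
      ring
    have hfinal : Real.exp (-(θ * (ϑ * m)) - θ * m) *
          Real.exp (θ * m + 2 * θ ^ 2 * c * ((m : ℝ) * (L / lam))) +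
        Real.exp (-(θ * (ϑ * m)) + θ * m) *
          Real.exp ((-θ) * m + 2 * (-θ) ^ 2 * c * ((m : ℝ) * (L / lam)))
        ≤ 2 * Real.exp (-(ϑ ^ 2 * lam ^ 4 * m) / (8 * L) ^ 2) := by
      rw [← Real.exp_add, ← Real.exp_add]
      have he1 : -(θ * (ϑ * m)) - θ * m + (θ * m + 2 * θ ^ 2 * c * ((m : ℝ) * (L / lam)))
          = -(θ * (ϑ * m)) / 2 := by rw [hD]; ring
      have he2 : -(θ * (ϑ * m)) + θ * m + ((-θ) * m + 2 * (-θ) ^ 2 * c * ((m : ℝ) * (L / lam)))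
          = -(θ * (ϑ * m)) / 2 := by
        have : (-θ)^2 = θ^2 := by ring
        rw [this, hD]; ring
      rw [he1, he2]
      have hexp_le : -(θ * (ϑ * m)) / 2 ≤ -(ϑ ^ 2 * lam ^ 4 * m) / (8 * L) ^ 2 := by
        have hhalf : θ * (ϑ * m) / 2 = ϑ ^ 2 * lam ^ 3 * m / (8 * L ^ 2) := by
          rw [hθdef]; field_simp; ring
        have hgoal : ϑ ^ 2 * lam ^ 4 * m / (8 * L) ^ 2 ≤ ϑ ^ 2 * lam ^ 3 * m / (8 * L ^ 2) := by
          rw [div_le_div_iff₀ (by positivity) (by positivity)]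
          have hl43 : lam ^ 4 ≤ lam ^ 3 := by nlinarith [pow_pos hlam0 3]
          nlinarith [sq_nonneg ϑ, mul_nonneg (mul_nonneg (sq_nonneg ϑ) (le_of_lt (pow_pos hlam0 3))) hm0,
            sq_nonneg L, mul_le_mul_of_nonneg_right hl43 hm0,
            mul_le_mul_of_nonneg_left (mul_le_mul_of_nonneg_right hl43 hm0) (sq_nonneg ϑ),
            pow_pos hLpos 2]
        calc -(θ * (ϑ * m)) / 2 = -(θ * (ϑ * m) / 2) := by ring
          _ ≤ -(ϑ ^ 2 * lam ^ 4 * m / (8 * L) ^ 2) := by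
              rw [hhalf]
              exact neg_le_neg hgoal
          _ = -(ϑ ^ 2 * lam ^ 4 * m) / (8 * L) ^ 2 := by ring
      have := Real.exp_le_exp.2 hexp_le
      linarith
    calc (∑ x : Fin (s + 1) → V,
        if x 0 = v₀ ∧ ϑ * m < |xiSum p W lam L (cap s x) s - m| then
          ∏ i : Fin s, p (x i.castSucc) (x i.succ) else 0)
        ≤ Real.exp (-(θ * (ϑ * m)) - θ * m) *
            (∑ y : Fin (s + 1) → V, (if y 0 = v₀ then
              (∏ i : Fin s, p (y i.castSucc) (y i.succ)) *
                Real.exp (θ * xiSum p W lam L (cap s y) s) else 0)) +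
          Real.exp (-(θ * (ϑ * m)) + θ * m) *
            (∑ y : Fin (s + 1) → V, (if y 0 = v₀ then
              (∏ i : Fin s, p (y i.castSucc) (y i.succ)) *
                Real.exp (-θ * xiSum p W lam L (cap s y) s) else 0)) := hsum
      _ ≤ Real.exp (-(θ * (ϑ * m)) - θ * m) *
            Real.exp (θ * m + 2 * θ ^ 2 * c * ((m : ℝ) * (L / lam))) +
          Real.exp (-(θ * (ϑ * m)) + θ * m) *
            Real.exp ((-θ) * m + 2 * (-θ) ^ 2 * c * ((m : ℝ) * (L / lam))) := by
          apply add_le_add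
          · exact mul_le_mul_of_nonneg_left hkeyp (le_of_lt (Real.exp_pos _))
          · refine mul_le_mul_of_nonneg_left ?_ (le_of_lt (Real.exp_pos _))
            refine le_trans (le_of_eq ?_) hkeym
            apply Finset.sum_congr rfl
            intro y _
            congr 2
      _ ≤ 2 * Real.exp (-(ϑ ^ 2 * lam ^ 4 * m) / (8 * L) ^ 2) := hfinal
  · -- trivial case : event is empty
    push_neg at hcase
    have hL1 : (1:ℝ) ≤ L / lam := by
      rw [le_div_iff₀ hlam0, one_mul]; exact hlamL
    have hϑ1 : (1:ℝ) ≤ ϑ := le_trans hL1 (le_of_lt hcase)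
    have hzero : (∑ x : Fin (s + 1) → V,
        if x 0 = v₀ ∧ ϑ * m < |xiSum p W lam L (cap s x) s - m| then
          ∏ i : Fin s, p (x i.castSucc) (x i.succ) else 0) = 0 := by
      apply Finset.sum_eq_zero
      intro x _
      rw [if_neg]
      rintro ⟨-, habs⟩
      have h1 := xiSum_nonneg p lam L W hp0 hlam0 hlamL hlamp (cap s x) s
      have h2 := xiSum_le p lam L W hp0 hlam0 hlamL hlamp (cap s x) s
      rw [hmW] at h2
      have h3 : (m:ℝ) * (L / lam) ≤ (m:ℝ) * ϑ :=
        mul_le_mul_of_nonneg_left (le_of_lt hcase) hm0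
      have habs' : |xiSum p W lam L (cap s x) s - m| ≤ ϑ * m := by
        rw [abs_le]
        constructor
        · nlinarith
        · nlinarith
      exact absurd habs (not_lt.2 habs')
    rw [hzero]
    positivity
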